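/- Let α = {a_1,…,a_n} be a multiset of rational numbers with each a_i ∈ (0,1) that is defined over ℚ, i.e., the polynomial ∏_{i=1}^n (X − e^{2πi a_i}) has integer coefficients, and let p be a prime not dividing the least common denominator of a_1,…,a_n. Then α is closed under the Dwork dash operation: the multiset {a_1',…,a_n'} equals α. -/

import Mathlib

/-- The first `p`-adic digit `[r]_0` of a rational `r` (with denominator prime to `p`):
the unique integer in `[0, p-1]` congruent to `r` modulo `p`. -/
def firstDigit (p : ℕ) [Fact p.Prime] (r : ℚ) : ℕ := ((r : ZMod p)).val

/-- The Dwork dash operation `r' = (r + [-r]_0)/p`. -/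
def dworkDash (p : ℕ) [Fact p.Prime] (r : ℚ) : ℚ := (r + (firstDigit p (-r) : ℚ)) / p

open Polynomial IntermediateField

/-- Abbreviation for `e^{2πi r}`. -/
private noncomputable def E (r : ℚ) : ℂ := Complex.exp (2 * (Real.pi : ℂ) * Complex.I * (r : ℂ))

private lemma E_inj {a b : ℚ} (ha0 : 0 ≤ a) (ha1 : a < 1) (hb0 : 0 ≤ b) (hb1 : b < 1)
    (h : E a = E b) : a = b := by
  rw [E, E, Complex.exp_eq_exp_iff_exists_int] at h
  obtain ⟨n, hn⟩ := h
  have hπ : (2 * (Real.pi : ℂ) * Complex.I) ≠ 0 := by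
    simp [Real.pi_ne_zero, Complex.I_ne_zero]
  have hC : (a : ℂ) = (b : ℂ) + (n : ℂ) := by
    have : 2 * (Real.pi : ℂ) * Complex.I * a = 2 * (Real.pi : ℂ) * Complex.I * (b + n) := by
      rw [hn]; ring
    exact mul_left_cancel₀ hπ this
  have hQ : a = b + (n : ℚ) := by exact_mod_cast hC
  have h1 : (n : ℚ) < 1 := by rw [hQ] at ha1; linarith
  have h2 : (-1 : ℚ) < n := by rw [hQ] at ha0; linarith
  have : n = 0 := by
    have h1' : n < 1 := by exact_mod_cast h1
    have h2' : (-1 : ℤ) < n := by exact_mod_cast h2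
    omega
  rw [hQ, this]; simp

private lemma map_E_cancel : ∀ (s : Multiset ℚ), ∀ (t : Multiset ℚ),
    (∀ x ∈ s, 0 ≤ x ∧ x < 1) → (∀ x ∈ t, 0 ≤ x ∧ x < 1) →
    s.map E = t.map E → s = t := by
  intro s
  induction s using Multiset.induction with
  | empty =>
    intro t _ _ h
    have : t.map E = 0 := by simpa using h.symm
    simpa using (Multiset.map_eq_zero.mp this).symm
  | cons a s ih =>
    intro t hs ht h
    have ha := hs a (Multiset.mem_cons_self a s)
    have hmem : E a ∈ t.map E := by
      rw [← h]; exact Multiset.mem_map_of_mem _ (Multiset.mem_cons_self a s)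
    obtain ⟨b, hb, hEb⟩ := Multiset.mem_map.mp hmem
    have hab : a = b := (E_inj (ht b hb).1 (ht b hb).2 ha.1 ha.2 hEb).symm
    subst hab
    have ht' : t = a ::ₘ t.erase a := (Multiset.cons_erase hb).symm
    rw [ht', Multiset.map_cons, Multiset.map_cons] at h
    have h' : s.map E = (t.erase a).map E := (Multiset.cons_inj_right _).mp h
    have := ih (t.erase a) (fun x hx => hs x (Multiset.mem_cons_of_mem hx))
      (fun x hx => ht x (Multiset.mem_of_mem_erase hx)) h'
    rw [ht', this]

private lemma E_pow (p : ℕ) (a : ℚ) : (E a) ^ p = E (Int.fract ((p : ℚ) * a)) := by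
  rw [E, E, ← Complex.exp_nat_mul]
  apply Complex.exp_eq_exp_iff_exists_int.mpr
  refine ⟨⌊(p : ℚ) * a⌋, ?_⟩
  rw [Int.fract]
  push_cast
  ring

private lemma dwork_fract (p : ℕ) [hp : Fact p.Prime] (a : ℚ) (h0 : 0 < a) (h1 : a < 1)
    (hden : ¬ (p ∣ a.den)) : dworkDash p (Int.fract ((p : ℚ) * a)) = a := by
  have hp0 : (0 : ℚ) < p := by exact_mod_cast hp.out.pos
  set m : ℤ := ⌊(p : ℚ) * a⌋ with hm
  have hm0 : 0 ≤ m := Int.le_floor.mpr (by positivity)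
  have hmp : m < p := by
    have : (p : ℚ) * a < p * 1 := mul_lt_mul_of_pos_left h1 hp0
    have h2 : (p : ℚ) * a < p := by simpa using this
    exact_mod_cast Int.floor_lt.mpr (by exact_mod_cast h2)
  set q : ℚ := -(Int.fract ((p : ℚ) * a)) with hqdef
  have hq : q = (m : ℚ) - (p : ℚ) * a := by rw [hqdef, Int.fract]; ring
  -- denominator of q divides that of a
  have hqden : (q.den : ℤ) ∣ (a.den : ℤ) := by
    have h1' : q.den ∣ ((m : ℚ)).den * (-((p : ℚ) * a)).den := by
      have : q = (m : ℚ) + -((p : ℚ) * a) := by rw [hq]; ring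
      rw [this]; exact Rat.add_den_dvd _ _
    have h2' : ((p : ℚ) * a).den ∣ ((p : ℚ)).den * a.den := Rat.mul_den_dvd _ _
    have h3' : ((p : ℚ)).den = 1 := Rat.den_natCast p
    have h4' : ((m : ℚ)).den = 1 := Rat.den_intCast m
    rw [Rat.den_neg_eq_den, h4', one_mul] at h1'
    rw [h3', one_mul] at h2'
    exact_mod_cast h1'.trans h2'
  have hqdenp : ¬ (p ∣ q.den) := fun h => hden (h.trans (by exact_mod_cast hqden))
  -- key integer identity
  have hkey : (q.num * a.den + (p : ℤ) * (a.num * q.den) : ℤ) = m * q.den * a.den := by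
    have hqd : ((q.den : ℚ)) ≠ 0 := by exact_mod_cast q.den_ne_zero
    have had : ((a.den : ℚ)) ≠ 0 := by exact_mod_cast a.den_ne_zero
    have hqQ : (q.num : ℚ) = q * q.den := by rw [q.mul_den_eq_num]
    have haQ : (a.num : ℚ) = a * a.den := by rw [a.mul_den_eq_num]
    have : ((q.num * a.den + (p : ℤ) * (a.num * q.den) : ℤ) : ℚ)
        = ((m * q.den * a.den : ℤ) : ℚ) := by
      push_cast
      rw [hqQ, haQ, hq]; ring
    exact_mod_cast this
  -- now in ZMod p
  have hadenZ : ((a.den : ZMod p)) ≠ 0 := by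
    rw [Ne, ZMod.natCast_eq_zero_iff]; exact hden
  have hqdenZ : ((q.den : ZMod p)) ≠ 0 := by
    rw [Ne, ZMod.natCast_eq_zero_iff]; exact hqdenp
  have hnum : ((q.num : ZMod p)) = (m : ZMod p) * (q.den : ZMod p) := by
    have := congrArg (Int.cast : ℤ → ZMod p) hkey
    push_cast at this
    rw [ZMod.natCast_self] at this
    simp only [zero_mul, mul_zero, add_zero] at this
    exact mul_right_cancel₀ hadenZ (by linear_combination this)
  have hcast : ((q : ZMod p)) = ((m.toNat : ℕ) : ZMod p) := by
    rw [Rat.cast_def, hnum, mul_div_assoc, div_self hqdenZ, mul_one,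
      show ((m.toNat : ℕ) : ZMod p) = ((m.toNat : ℤ) : ZMod p) by push_cast; ring,
      Int.toNat_of_nonneg hm0]
  have hfd : firstDigit p q = m.toNat := by
    rw [firstDigit, hcast, ZMod.val_cast_of_lt]
    omega
  have hq' : -(Int.fract ((p : ℚ) * a)) = q := hqdef.symm
  rw [dworkDash, hq', hfd]
  have hfr : Int.fract ((p : ℚ) * a) = (p : ℚ) * a - m := by rw [Int.fract]
  rw [hfr]
  have hmQ : ((m.toNat : ℕ) : ℚ) = (m : ℚ) := by
    exact_mod_cast congrArg (Int.cast : ℤ → ℚ) (Int.toNat_of_nonneg hm0)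
  rw [hmQ]
  field_simp
  ring

/-- The Galois-conjugation (Frobenius) step: if an integer polynomial has the
`ζ^(k a)` as its roots, then the multiset of roots is stable under `x ↦ x^p`. -/
private lemma galois_step (N p : ℕ) [hp : Fact p.Prime] (hN0 : N ≠ 0)
    (hcop : Nat.Coprime p N) (α : Multiset ℚ) (k : ℚ → ℕ) (P : Polynomial ℤ)
    (hP : P.map (Int.castRingHom ℂ) =
      (α.map fun a => X - C ((Complex.exp (2 * Real.pi * Complex.I / N)) ^ (k a))).prod) :
    α.map (fun a => ((Complex.exp (2 * Real.pi * Complex.I / N)) ^ (k a)) ^ p)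
      = α.map (fun a => (Complex.exp (2 * Real.pi * Complex.I / N)) ^ (k a)) := by
  have hNpos : 0 < N := Nat.pos_of_ne_zero hN0
  set ζ : ℂ := Complex.exp (2 * Real.pi * Complex.I / N) with hζdef
  have hζ : IsPrimitiveRoot ζ N := Complex.isPrimitiveRoot_exp N hN0
  have hζint : IsIntegral ℚ ζ := (hζ.isIntegral hNpos).tower_top
  let K := ℚ⟮ζ⟯
  let ζK : K := IntermediateField.AdjoinSimple.gen ℚ ζ
  have hι : algebraMap K ℂ ζK = ζ := IntermediateField.AdjoinSimple.algebraMap_gen ℚ ζ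
  have hinj : Function.Injective (algebraMap K ℂ) := (algebraMap K ℂ).injective
  have hmin : minpoly ℚ ζK = Polynomial.cyclotomic N ℚ := by
    rw [show minpoly ℚ ζK = minpoly ℚ ζ from IntermediateField.minpoly_gen (F := ℚ) (α := ζ), ← Polynomial.cyclotomic_eq_minpoly_rat hζ hNpos]
  let pb : PowerBasis ℚ K := IntermediateField.adjoin.powerBasis hζint
  have hpbgen : pb.gen = ζK := rfl
  have hprim_p : IsPrimitiveRoot (ζ ^ p) N := hζ.pow_of_coprime p hcop
  have hy : Polynomial.aeval (ζ ^ p) (minpoly ℚ pb.gen) = 0 := by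
    rw [hpbgen, hmin, Polynomial.aeval_def, ← Polynomial.eval_map, Polynomial.map_cyclotomic]
    exact hprim_p.isRoot_cyclotomic hNpos
  let σ : K →ₐ[ℚ] ℂ := pb.lift (ζ ^ p) hy
  have hσζ : σ ζK = ζ ^ p := by
    have := pb.lift_gen (ζ ^ p) hy
    rwa [hpbgen] at this
  set QK : Polynomial K := (α.map fun a => X - C (ζK ^ (k a))).prod with hQK
  have hmapι : QK.map (algebraMap K ℂ) = P.map (Int.castRingHom ℂ) := by
    rw [hQK, Polynomial.map_multiset_prod, Multiset.map_map, hP]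
    apply congrArg
    apply Multiset.map_congr rfl
    intro a _
    rw [Function.comp_apply, Polynomial.map_sub, Polynomial.map_X, Polynomial.map_C]
    congr 1
  have hQKeq : QK = P.map (Int.castRingHom K) := by
    apply Polynomial.map_injective (algebraMap K ℂ) hinj
    rw [hmapι, Polynomial.map_map]
    congr 1
  have hmapσ : QK.map (σ : K →+* ℂ) = P.map (Int.castRingHom ℂ) := by
    rw [hQKeq, Polynomial.map_map]
    congr 1
    exact RingHom.ext_int _ _
  have hexp : QK.map (σ : K →+* ℂ) = (α.map fun a => X - C ((ζ ^ (k a)) ^ p)).prod := by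
    rw [hQK, Polynomial.map_multiset_prod, Multiset.map_map]
    apply congrArg
    apply Multiset.map_congr rfl
    intro a _
    rw [Function.comp_apply, Polynomial.map_sub, Polynomial.map_X, Polynomial.map_C]
    congr 1
    rw [map_pow, show ((σ : K →+* ℂ) ζK) = ζ ^ p from hσζ, ← pow_mul, ← pow_mul, mul_comm]
  have hfinal : (α.map fun a => X - C ((ζ ^ (k a)) ^ p)).prod
      = (α.map fun a => X - C (ζ ^ (k a))).prod := by
    rw [← hexp, hmapσ, hP]
  have := congrArg Polynomial.roots hfinal
  rwa [show (α.map fun a => X - C ((ζ ^ (k a)) ^ p)) = ((α.map fun a => (ζ ^ (k a)) ^ p).map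
        fun c => X - C c) by rw [Multiset.map_map]; rfl,
    show (α.map fun a => X - C (ζ ^ (k a))) = ((α.map fun a => ζ ^ (k a)).map
        fun c => X - C c) by rw [Multiset.map_map]; rfl,
    Polynomial.roots_multiset_prod_X_sub_C, Polynomial.roots_multiset_prod_X_sub_C] at this

private lemma kval (N : ℕ) {a : ℚ} (ha : 0 < a) (hden : a.den ∣ N) :
    (((a * N).num.toNat : ℚ)) = a * N := by
  obtain ⟨c, hc⟩ := hden
  have had : ((a.den : ℚ)) ≠ 0 := by exact_mod_cast a.den_ne_zero
  have h1 : (a * N : ℚ) = ((a.num * c : ℤ) : ℚ) := by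
    push_cast [hc]
    rw [show (a : ℚ) * ((a.den : ℚ) * c) = ((a.num : ℚ) / a.den) * a.den * c by
      rw [Rat.num_div_den]; ring]
    field_simp
  have hnum : (a * N).num = a.num * c := by rw [h1, Rat.num_intCast]
  have hnn : 0 ≤ (a * N).num := Rat.num_nonneg.mpr (by positivity)
  rw [show (((a * N).num.toNat : ℕ) : ℚ) = (((a * N).num.toNat : ℤ) : ℚ) by push_cast; ring,
    Int.toNat_of_nonneg hnn, hnum, ← h1]

private lemma root_eq (N : ℕ) (hN0 : N ≠ 0) {a : ℚ} (ha : 0 < a) (hden : a.den ∣ N) :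
    E a = Complex.exp (2 * Real.pi * Complex.I / N) ^ ((a * N).num.toNat) := by
  rw [← Complex.exp_nat_mul, E]
  congr 1
  have hk : (((a * N).num.toNat : ℚ) : ℂ) = (a : ℂ) * N := by
    exact_mod_cast congrArg (fun q : ℚ => (q : ℂ)) (kval N ha hden)
  have hNC : ((N : ℂ)) ≠ 0 := by exact_mod_cast hN0
  push_cast at hk ⊢
  field_simp
  linear_combination -hk

/-- If `α` is a multiset of rationals in `(0,1)` defined over `ℚ`
(i.e. `∏ (X - e^{2πi a}) ∈ ℤ[X]`) and `p` is a prime not dividing the least common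
denominator of the entries of `α`, then `α` is closed under the Dwork dash operation. -/
theorem defined_over_Q_closed_under_dash (α : Multiset ℚ)
    (hmem : ∀ a ∈ α, 0 < a ∧ a < 1)
    (hQ : ∃ P : Polynomial ℤ, P.map (Int.castRingHom ℂ) =
      (α.map fun a =>
        Polynomial.X - Polynomial.C (Complex.exp (2 * (Real.pi : ℂ) * Complex.I * (a : ℂ)))).prod)
    (p : ℕ) [hp : Fact p.Prime] (hM : ¬ p ∣ (α.map Rat.den).lcm) :
    α.map (dworkDash p) = α := by
  classical
  obtain ⟨P, hP⟩ := hQ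
  set N : ℕ := (α.map Rat.den).lcm with hNdef
  have hN0 : N ≠ 0 := fun h => hM (h ▸ dvd_zero p)
  have hcop : Nat.Coprime p N := (hp.out.coprime_iff_not_dvd).mpr hM
  have hdvdN : ∀ a ∈ α, a.den ∣ N := fun a ha =>
    Multiset.dvd_lcm (Multiset.mem_map_of_mem _ ha)
  have hpden : ∀ a ∈ α, ¬ (p ∣ a.den) := fun a ha hd => hM (hd.trans (hdvdN a ha))
  set k : ℚ → ℕ := fun a => (a * N).num.toNat with hk
  set ζ : ℂ := Complex.exp (2 * Real.pi * Complex.I / N) with hζdef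
  have hroot : ∀ a ∈ α, E a = ζ ^ (k a) := fun a ha =>
    root_eq N hN0 (hmem a ha).1 (hdvdN a ha)
  -- rewrite hP in terms of ζ powers
  have hP' : P.map (Int.castRingHom ℂ) = (α.map fun a => X - C (ζ ^ (k a))).prod := by
    rw [hP]
    apply congrArg
    have hbind : (do let a ← α; pure ((a : ℚ) : ℂ)) = α.map (fun a : ℚ => (a : ℂ)) := by
      simp [Multiset.bind_singleton]
    rw [hbind, Multiset.map_map]
    apply Multiset.map_congr rfl
    intro a ha
    rw [Function.comp_apply,
      show Complex.exp (2 * (Real.pi : ℂ) * Complex.I * (a : ℂ)) = E a from rfl,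
      hroot a ha]
  have hgal := galois_step N p hN0 hcop α k P hP'
  -- convert to a statement about fractional parts
  set g : ℚ → ℚ := fun a => Int.fract ((p : ℚ) * a) with hg
  have hEg : α.map (fun a => E (g a)) = α.map E := by
    calc α.map (fun a => E (g a))
        = α.map (fun a => (ζ ^ (k a)) ^ p) := by
          apply Multiset.map_congr rfl
          intro a ha
          rw [← hroot a ha, E_pow p a]
      _ = α.map (fun a => ζ ^ (k a)) := hgal
      _ = α.map E := by
          apply Multiset.map_congr rfl
          intro a ha
          rw [hroot a ha]
  have hmapg : α.map g = α := by
    apply map_E_cancel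
    · intro x hx
      obtain ⟨a, _, rfl⟩ := Multiset.mem_map.mp hx
      exact ⟨Int.fract_nonneg _, Int.fract_lt_one _⟩
    · intro x hx
      exact ⟨le_of_lt (hmem x hx).1, (hmem x hx).2⟩
    · rw [Multiset.map_map]
      exact hEg
  conv_lhs => rw [← hmapg]
  rw [Multiset.map_map]
  rw [show Multiset.map (dworkDash p ∘ g) α = α.map id from
    Multiset.map_congr rfl (fun a ha => dwork_fract p a (hmem a ha).1 (hmem a ha).2
      (hpden a ha)), Multiset.map_id]
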